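/- Let κ > 0, τ > 0 be constants, and let θ : ℝ × ℝ³ → (0,∞) and q : ℝ × ℝ³ → ℝ³ be C¹ fields satisfying the Cattaneo system: ∂_t ε + div q = 0 and τ ∂_t q^A + κ ∂_{x^A} θ = −q^A for A = 1,2,3, where ε = ε^eq(θ) + (τ/(θκ))‖q‖² with ε^eq C¹. Let s^eq be C¹ with (s^eq)'(u) = (ε^eq)'(u)/u. Then the entropy balance ∂_t( s^eq(θ) + (τ/(2θ²κ))‖q‖² ) + div(q/θ) = ‖q‖²/(κθ²) holds pointwise. -/

import Mathlib

/-- Time derivative of a scalar field on ℝ × ℝ³. -/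
noncomputable def dt (f : ℝ × (Fin 3 → ℝ) → ℝ) (x : ℝ × (Fin 3 → ℝ)) : ℝ :=
  fderiv ℝ f x (1, 0)

/-- Spatial derivative ∂_{x^A} of a scalar field on ℝ × ℝ³. -/
noncomputable def dX (A : Fin 3) (f : ℝ × (Fin 3 → ℝ) → ℝ) (x : ℝ × (Fin 3 → ℝ)) : ℝ :=
  fderiv ℝ f x (0, Pi.single A 1)

set_option maxHeartbeats 2000000 in
theorem entropy_balance_is_SBL
    (κ τ : ℝ) (hκ : 0 < κ) (hτ : 0 < τ)
    (θf : ℝ × (Fin 3 → ℝ) → ℝ) (qf : ℝ × (Fin 3 → ℝ) → (Fin 3 → ℝ))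
    (hθ : ContDiff ℝ 1 θf) (hq : ContDiff ℝ 1 qf)
    (hθpos : ∀ x, 0 < θf x)
    (εeq seq : ℝ → ℝ) (hεeq : ContDiff ℝ 1 εeq) (hseq : ContDiff ℝ 1 seq)
    (hGibbs : ∀ u > (0 : ℝ), deriv seq u = deriv εeq u / u)
    -- energy balance: ∂_t ε + div q = 0, with ε = ε^eq(θ) + (τ/(θκ))‖q‖²
    (hEnergy : ∀ x,
      dt (fun y => εeq (θf y) + (τ / (θf y * κ)) * ∑ A, (qf y A) ^ 2) x +
        ∑ A, dX A (fun y => qf y A) x = 0)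
    -- Cattaneo equation: τ ∂_t q^A + κ ∂_{x^A} θ = −q^A
    (hCattaneo : ∀ (A : Fin 3) x,
      τ * dt (fun y => qf y A) x + κ * dX A θf x = -qf x A) :
    -- entropy balance with nonnegative production ‖q‖²/(κθ²)
    ∀ x,
      dt (fun y => seq (θf y) + (τ / (2 * (θf y) ^ 2 * κ)) * ∑ A, (qf y A) ^ 2) x +
        ∑ A, dX A (fun y => qf y A / θf y) x =
      (∑ A, (qf x A) ^ 2) / (κ * (θf x) ^ 2) := by
  intro x
  have hθ0 : θf x ≠ 0 := (hθpos x).ne'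
  have hκ0 : κ ≠ 0 := hκ.ne'
  have HθF : HasFDerivAt θf (fderiv ℝ θf x) x := (hθ.differentiable one_ne_zero x).hasFDerivAt
  have HqF : ∀ A, HasFDerivAt (fun y => qf y A) (fderiv ℝ (fun y => qf y A) x) x := by
    intro A
    exact ((differentiableAt_pi.mp (hq.differentiable one_ne_zero x)) A).hasFDerivAt
  set Dθ := fderiv ℝ θf x with hDθ
  set Dq := fun A => fderiv ℝ (fun y => qf y A) x with hDq
  set θ := θf x with hθx
  -- squares
  have Hsq : ∀ A, HasFDerivAt (fun y => (qf y A) ^ 2)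
      (((2 : ℕ) * (qf x A) ^ 1) • Dq A) x := fun A =>
    HasDerivAt.comp_hasFDerivAt (f := fun y => qf y A) (h₂ := fun u : ℝ => u ^ 2) x (hasDerivAt_pow 2 (qf x A)) (HqF A)
  have HQ : HasFDerivAt (fun y => ∑ A, (qf y A) ^ 2)
      (∑ A, ((2 : ℕ) * (qf x A) ^ 1) • Dq A) x :=
    HasFDerivAt.fun_sum (fun A _ => Hsq A)
  -- energy coefficient τ/(u κ)
  have Hg1 : HasDerivAt (fun u : ℝ => τ / u)
      ((0 * (θ * κ) - τ * 1) / (θ * κ) ^ 2) (θ * κ) :=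
    (hasDerivAt_const _ τ).div (hasDerivAt_id _) (mul_ne_zero hθ0 hκ0)
  have Hc1 : HasFDerivAt (fun y => τ / (θf y * κ))
      (((0 * (θ * κ) - τ * 1) / (θ * κ) ^ 2) • (κ • Dθ)) x :=
    HasDerivAt.comp_hasFDerivAt (f := fun y => θf y * κ) x Hg1 (HθF.mul_const κ)
  have Hεθ : HasFDerivAt (fun y => εeq (θf y)) (deriv εeq θ • Dθ) x :=
    HasDerivAt.comp_hasFDerivAt x (hεeq.differentiable one_ne_zero θ).hasDerivAt HθF
  have HE : HasFDerivAt (fun y => εeq (θf y) + (τ / (θf y * κ)) * ∑ A, (qf y A) ^ 2)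
      ((deriv εeq θ • Dθ) +
        ((τ / (θ * κ)) • (∑ A, ((2 : ℕ) * (qf x A) ^ 1) • Dq A) +
          (∑ A, (qf x A) ^ 2) • (((0 * (θ * κ) - τ * 1) / (θ * κ) ^ 2) • (κ • Dθ)))) x :=
    Hεθ.add (Hc1.mul HQ)
  -- entropy coefficient τ/(2u²κ)
  have hden2 : 2 * θ ^ 2 * κ ≠ 0 := by positivity
  have Hg2 : HasDerivAt (fun u : ℝ => τ / u)
      ((0 * (2 * θ ^ 2 * κ) - τ * 1) / (2 * θ ^ 2 * κ) ^ 2) (2 * θ ^ 2 * κ) :=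
    (hasDerivAt_const _ τ).div (hasDerivAt_id _) hden2
  have Hinner2 : HasFDerivAt (fun y => 2 * (θf y) ^ 2 * κ)
      (κ • ((2 : ℝ) • (((2 : ℕ) * θ ^ 1) • Dθ))) x :=
    ((HasDerivAt.comp_hasFDerivAt (f := θf) x (hasDerivAt_pow 2 θ) HθF).const_mul 2).mul_const κ
  have Hc2 : HasFDerivAt (fun y => τ / (2 * (θf y) ^ 2 * κ))
      (((0 * (2 * θ ^ 2 * κ) - τ * 1) / (2 * θ ^ 2 * κ) ^ 2) • (κ • ((2 : ℝ) • (((2 : ℕ) * θ ^ 1) • Dθ)))) x :=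
    HasDerivAt.comp_hasFDerivAt (f := fun y => 2 * (θf y) ^ 2 * κ) x Hg2 Hinner2
  have Hsθ : HasFDerivAt (fun y => seq (θf y)) (deriv seq θ • Dθ) x :=
    HasDerivAt.comp_hasFDerivAt x (hseq.differentiable one_ne_zero θ).hasDerivAt HθF
  have HS : HasFDerivAt (fun y => seq (θf y) + (τ / (2 * (θf y) ^ 2 * κ)) * ∑ A, (qf y A) ^ 2)
      ((deriv seq θ • Dθ) +
        ((τ / (2 * θ ^ 2 * κ)) • (∑ A, ((2 : ℕ) * (qf x A) ^ 1) • Dq A) +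
          (∑ A, (qf x A) ^ 2) •
            (((0 * (2 * θ ^ 2 * κ) - τ * 1) / (2 * θ ^ 2 * κ) ^ 2) • (κ • ((2 : ℝ) • (((2 : ℕ) * θ ^ 1) • Dθ)))))) x :=
    Hsθ.add (Hc2.mul HQ)
  -- inverse of θ and q/θ
  have Hinv : HasFDerivAt (fun y => (θf y)⁻¹) ((-(θ ^ 2)⁻¹) • Dθ) x :=
    HasDerivAt.comp_hasFDerivAt x (hasDerivAt_inv hθ0) HθF
  have Hdiv : ∀ A, HasFDerivAt (fun y => qf y A / θf y)
      ((qf x A) • ((-(θ ^ 2)⁻¹) • Dθ) + θ⁻¹ • Dq A) x := by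
    intro A
    have := (HqF A).fun_mul Hinv
    simpa [div_eq_mul_inv] using this
  -- scalar abbreviations
  set a := Dθ (1, 0) with ha
  set b := fun A => Dq A (1, 0) with hb
  -- expand hEnergy
  have hE := hEnergy x
  rw [dt] at hE
  rw [HE.fderiv] at hE
  simp only [ContinuousLinearMap.add_apply, ContinuousLinearMap.smul_apply,
    ContinuousLinearMap.sum_apply, smul_eq_mul, Finset.mul_sum] at hE
  -- expand Cattaneo
  have hC : ∀ A : Fin 3, τ * b A + κ * Dθ (0, Pi.single A 1) = -qf x A := by
    intro A
    have := hCattaneo A x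
    rw [dt, dX] at this
    exact this
  -- goal
  rw [dt, HS.fderiv]
  have hdXdiv : ∀ A : Fin 3, dX A (fun y => qf y A / θf y) x =
      (qf x A) * ((-(θ ^ 2)⁻¹) * Dθ (0, Pi.single A 1)) + θ⁻¹ * Dq A (0, Pi.single A 1) := by
    intro A
    rw [dX, (Hdiv A).fderiv]
    simp
  simp only [hdXdiv, ContinuousLinearMap.add_apply, ContinuousLinearMap.smul_apply,
    ContinuousLinearMap.sum_apply, smul_eq_mul, Finset.mul_sum]
  -- now algebra
  have hGb := hGibbs θ (hθpos x)
  set dε := deriv εeq θ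
  set ds := deriv seq θ
  have hDq' : ∀ A, fderiv ℝ (fun y => qf y A) x = Dq A := fun A => rfl
  simp only [dX, hDq'] at hE
  simp only [Fin.sum_univ_three] at hE ⊢
  have e0 : Dθ (0, Pi.single (0:Fin 3) 1) = (-qf x 0 - τ * (Dq 0) (1,0)) / κ := by
    rw [eq_div_iff hκ0]; have := hC 0; simp only [hb] at this; linarith
  have e1 : Dθ (0, Pi.single (1:Fin 3) 1) = (-qf x 1 - τ * (Dq 1) (1,0)) / κ := by
    rw [eq_div_iff hκ0]; have := hC 1; simp only [hb] at this; linarith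
  have e2 : Dθ (0, Pi.single (2:Fin 3) 1) = (-qf x 2 - τ * (Dq 2) (1,0)) / κ := by
    rw [eq_div_iff hκ0]; have := hC 2; simp only [hb] at this; linarith
  rw [hGb, e0, e1, e2]
  field_simp at hE ⊢
  linear_combination 2 * hE
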